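/- Partitioned diagonalization of the Szegedy reflection: let Z_1, …, Z_M be a partition of {0,…,N−1} into nonempty disjoint subsets. For each x, fix b_x ∈ {0,…,N−1} and unitary N×N matrices U_{x,y} for y ∈ Z_x with U_{x,y} φ_y = e_{b_x}. Define U_x = Σ_{y ∈ Z_x} e_y e_y† ⊗ U_{x,y} + Σ_{y' ∉ Z_x} e_{y'} e_{y'}† ⊗ I_N and D_x = 2 (Σ_{y ∈ Z_x} e_y e_y†) ⊗ e_{b_x} e_{b_x}† − I. Then for each x, U_x† D_x U_x = 2Π_x − I where Π_x = Σ_{y ∈ Z_x} ψ_y ψ_y†, the Π_x are mutually orthogonal projections summing to Π, and consequently S ∏_{x=1}^{M} U_x† D_x U_x = (−1)^{M−1} U_walk. -/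

import Mathlib

open Matrix BigOperators

/-- The `i`-th column state of the transition matrix `P`: `(φ_i)_j = √(P_{j,i})`. -/
noncomputable def colState {N : ℕ} (P : Matrix (Fin N) (Fin N) ℝ) (i : Fin N) :
    Fin N → ℂ :=
  fun j => (Real.sqrt (P j i) : ℂ)

/-- The `i`-th projector state `ψ_i = e_i ⊗ φ_i ∈ ℂ^N ⊗ ℂ^N`. -/
noncomputable def projState {N : ℕ} (P : Matrix (Fin N) (Fin N) ℝ) (i : Fin N) :
    Fin N × Fin N → ℂ :=
  fun p => (if p.1 = i then 1 else 0) * colState P i p.2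

/-- The projection `Π = Σ_i ψ_i ψ_i†`, as a matrix on `ℂ^N ⊗ ℂ^N`. -/
noncomputable def szegedyProj {N : ℕ} (P : Matrix (Fin N) (Fin N) ℝ) :
    Matrix (Fin N × Fin N) (Fin N × Fin N) ℂ :=
  ∑ i : Fin N,
    Matrix.of (fun p q => projState P i p * (starRingEnd ℂ) (projState P i q))

/-- The partial projection `Π_x = Σ_{y ∈ Z_x} ψ_y ψ_y†` associated to a subset `Z_x`. -/
noncomputable def szegedyProjOn {N : ℕ} (P : Matrix (Fin N) (Fin N) ℝ)
    (Zx : Finset (Fin N)) : Matrix (Fin N × Fin N) (Fin N × Fin N) ℂ :=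
  ∑ y ∈ Zx,
    Matrix.of (fun p q => projState P y p * (starRingEnd ℂ) (projState P y q))

/-- The swap operator `S` on `ℂ^N ⊗ ℂ^N`, determined by `S(u ⊗ v) = v ⊗ u`. -/
def swapOp (N : ℕ) : Matrix (Fin N × Fin N) (Fin N × Fin N) ℂ :=
  Matrix.of (fun p q => if p.1 = q.2 ∧ p.2 = q.1 then 1 else 0)

/-- The operator `U_x = Σ_{y ∈ Z_x} e_y e_y† ⊗ U_{x,y} + Σ_{y' ∉ Z_x} e_{y'} e_{y'}† ⊗ I_N`. -/
def partBlock {N : ℕ} (Zx : Finset (Fin N)) (Uxy : Fin N → Matrix (Fin N) (Fin N) ℂ) :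
    Matrix (Fin N × Fin N) (Fin N × Fin N) ℂ :=
  Matrix.of (fun p q =>
    if p.1 = q.1 then
      (if p.1 ∈ Zx then Uxy p.1 p.2 q.2 else if p.2 = q.2 then 1 else 0)
    else 0)

/-- The operator `D_x = 2 (Σ_{y ∈ Z_x} e_y e_y†) ⊗ e_{b_x} e_{b_x}† − I`. -/
def partDiag {N : ℕ} (Zx : Finset (Fin N)) (bx : Fin N) :
    Matrix (Fin N × Fin N) (Fin N × Fin N) ℂ :=
  Matrix.of (fun p q =>
    2 * (if p.1 = q.1 ∧ p.1 ∈ Zx then 1 else 0) *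
        (if p.2 = bx then 1 else 0) * (if q.2 = bx then 1 else 0) -
      (if p = q then 1 else 0))

noncomputable def projMat {N : ℕ} (P : Matrix (Fin N) (Fin N) ℝ) (i : Fin N) :
    Matrix (Fin N × Fin N) (Fin N × Fin N) ℂ :=
  Matrix.of (fun p q => projState P i p * (starRingEnd ℂ) (projState P i q))

lemma colState_real {N : ℕ} (P : Matrix (Fin N) (Fin N) ℝ) (i j : Fin N) :
    (starRingEnd ℂ) (colState P i j) = colState P i j := by
  simp [colState]

lemma colState_sum {N : ℕ} (P : Matrix (Fin N) (Fin N) ℝ)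
    (hnonneg : ∀ j i, 0 ≤ P j i) (hcol : ∀ i, ∑ j, P j i = 1) (i : Fin N) :
    ∑ j, colState P i j * colState P i j = 1 := by
  have h : ∀ j : Fin N, colState P i j * colState P i j = ((P j i : ℝ) : ℂ) := by
    intro j
    simp only [colState]
    rw [← Complex.ofReal_mul, Real.mul_self_sqrt (hnonneg j i)]
  rw [Finset.sum_congr rfl (fun j _ => h j)]
  norm_cast
  exact hcol i

lemma inner_proj {N : ℕ} (P : Matrix (Fin N) (Fin N) ℝ)
    (hnonneg : ∀ j i, 0 ≤ P j i) (hcol : ∀ i, ∑ j, P j i = 1) (a c : Fin N) :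
    ∑ r : Fin N × Fin N, (starRingEnd ℂ) (projState P a r) * projState P c r
      = if a = c then 1 else 0 := by
  rw [Fintype.sum_prod_type]
  simp only [projState, _root_.map_mul, colState_real, apply_ite (starRingEnd ℂ), _root_.map_one, map_zero]
  by_cases h : a = c
  · subst h
    simp [Finset.sum_ite_eq, ite_mul, mul_ite, colState_real, colState_sum P hnonneg hcol a]
  · simp only [if_neg h]
    apply Finset.sum_eq_zero
    intro r1 _
    by_cases h1 : r1 = a <;> by_cases h2 : r1 = c <;> simp_all

lemma projMat_mul {N : ℕ} (P : Matrix (Fin N) (Fin N) ℝ)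
    (hnonneg : ∀ j i, 0 ≤ P j i) (hcol : ∀ i, ∑ j, P j i = 1) (a c : Fin N) :
    projMat P a * projMat P c = if a = c then projMat P a else 0 := by
  ext p q
  rw [Matrix.mul_apply]
  have h : ∀ r : Fin N × Fin N, projMat P a p r * projMat P c r q =
      (projState P a p * (starRingEnd ℂ) (projState P c q)) *
        ((starRingEnd ℂ) (projState P a r) * projState P c r) := by
    intro r; simp only [projMat, of_apply]; ring
  rw [Finset.sum_congr rfl (fun r _ => h r), ← Finset.mul_sum,
    inner_proj P hnonneg hcol a c]
  by_cases h : a = c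
  · subst h; simp [projMat]
  · simp [h]

lemma szegedyProjOn_eq {N : ℕ} (P : Matrix (Fin N) (Fin N) ℝ) (Zx : Finset (Fin N)) :
    szegedyProjOn P Zx = ∑ y ∈ Zx, projMat P y := rfl

lemma projOn_mul {N : ℕ} (P : Matrix (Fin N) (Fin N) ℝ)
    (hnonneg : ∀ j i, 0 ≤ P j i) (hcol : ∀ i, ∑ j, P j i = 1)
    (Zx Zy : Finset (Fin N)) (hd : Disjoint Zx Zy) :
    szegedyProjOn P Zx * szegedyProjOn P Zy = 0 := by
  rw [szegedyProjOn_eq, szegedyProjOn_eq, Finset.sum_mul_sum]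
  apply Finset.sum_eq_zero; intro a ha
  apply Finset.sum_eq_zero; intro c hc
  rw [projMat_mul P hnonneg hcol a c, if_neg]
  exact fun h => Finset.disjoint_left.mp hd ha (h ▸ hc)

lemma projOn_idem {N : ℕ} (P : Matrix (Fin N) (Fin N) ℝ)
    (hnonneg : ∀ j i, 0 ≤ P j i) (hcol : ∀ i, ∑ j, P j i = 1)
    (Zx : Finset (Fin N)) :
    szegedyProjOn P Zx * szegedyProjOn P Zx = szegedyProjOn P Zx := by
  rw [szegedyProjOn_eq, Finset.sum_mul_sum]
  rw [Finset.sum_congr rfl (fun a ha => Finset.sum_congr rfl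
    (fun c hc => projMat_mul P hnonneg hcol a c))]
  simp

lemma projOn_herm {N : ℕ} (P : Matrix (Fin N) (Fin N) ℝ) (Zx : Finset (Fin N)) :
    (szegedyProjOn P Zx).IsHermitian := by
  unfold Matrix.IsHermitian
  rw [szegedyProjOn_eq, conjTranspose_sum]
  apply Finset.sum_congr rfl
  intro y _
  ext p q
  simp only [conjTranspose_apply, projMat, of_apply, star_mul',
    Complex.star_def, Complex.conj_conj]
  ring

lemma projOn_sum {N : ℕ} (P : Matrix (Fin N) (Fin N) ℝ) {M : ℕ}
    (Z : Fin M → Finset (Fin N))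
    (hZdisj : ∀ x y, x ≠ y → Disjoint (Z x) (Z y))
    (hZcover : ∀ i : Fin N, ∃ x, i ∈ Z x) :
    ∑ x, szegedyProjOn P (Z x) = szegedyProj P := by
  have huniv : (Finset.univ : Finset (Fin N)) = Finset.univ.biUnion Z := by
    ext i; simpa using hZcover i
  have : szegedyProj P = ∑ y ∈ Finset.univ.biUnion Z, projMat P y := by
    rw [← huniv]; rfl
  rw [this, Finset.sum_biUnion (fun x _ y _ hxy => hZdisj x y hxy)]
  rfl

def qMat {N : ℕ} (Zx : Finset (Fin N)) (bx : Fin N) :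
    Matrix (Fin N × Fin N) (Fin N × Fin N) ℂ :=
  Matrix.of (fun p q =>
    (if p.1 = q.1 ∧ p.1 ∈ Zx then 1 else 0) *
      (if p.2 = bx then 1 else 0) * (if q.2 = bx then 1 else 0))

lemma partDiag_eq {N : ℕ} (Zx : Finset (Fin N)) (bx : Fin N) :
    partDiag Zx bx = (2 : ℂ) • qMat Zx bx - 1 := by
  ext p q
  simp only [partDiag, qMat, of_apply, Matrix.sub_apply, Matrix.smul_apply, one_apply, smul_eq_mul]
  ring

-- unitary entry lemma: Uxy x y (b x) j = colState P y j
lemma unitary_row {N : ℕ} (P : Matrix (Fin N) (Fin N) ℝ)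
    (u : Matrix (Fin N) (Fin N) ℂ) (bx : Fin N) (y : Fin N)
    (hu : u ∈ Matrix.unitaryGroup (Fin N) ℂ)
    (hphi : u.mulVec (colState P y) = Pi.single bx 1) (j : Fin N) :
    u bx j = colState P y j := by
  have h1 : (star u).mulVec (u.mulVec (colState P y))
      = (star u).mulVec (Pi.single bx 1) := by rw [hphi]
  rw [Matrix.mulVec_mulVec, hu.1, Matrix.one_mulVec] at h1
  have h2 := congrFun h1 j
  rw [Matrix.mulVec_single] at h2
  simp only [Pi.smul_apply, MulOpposite.op_one, one_smul, Matrix.col_apply, mul_one, Matrix.star_apply] at h2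
  have h3 := congrArg (starRingEnd ℂ) h2
  rw [colState_real] at h3
  simp only [Complex.star_def, Complex.conj_conj] at h3
  exact h3.symm

lemma UU_eq {N : ℕ} (Zx : Finset (Fin N)) (Uf : Fin N → Matrix (Fin N) (Fin N) ℂ)
    (hu : ∀ y ∈ Zx, Uf y ∈ Matrix.unitaryGroup (Fin N) ℂ) :
    (partBlock Zx Uf)ᴴ * partBlock Zx Uf = 1 := by
  ext ⟨p1, p2⟩ ⟨q1, q2⟩
  rw [Matrix.mul_apply, Fintype.sum_prod_type]
  have key : ∀ r1 r2 : Fin N,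
      (partBlock Zx Uf)ᴴ (p1, p2) (r1, r2) * partBlock Zx Uf (r1, r2) (q1, q2) =
      if r1 = p1 then
        (if r1 = q1 then
          (if r1 ∈ Zx then star (Uf r1 r2 p2) * Uf r1 r2 q2
           else (if r2 = p2 then 1 else 0) * (if r2 = q2 then 1 else 0))
         else 0)
      else 0 := by
    intro r1 r2
    simp only [partBlock, conjTranspose_apply, of_apply]
    split_ifs <;> simp_all
  rw [Finset.sum_congr rfl (fun r1 _ => Finset.sum_congr rfl (fun r2 _ => key r1 r2))]
  simp only [Finset.sum_ite_irrel, Finset.sum_const_zero, Finset.sum_ite_eq',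
    Finset.mem_univ, if_true]
  by_cases hpq : p1 = q1
  · subst hpq
    simp only [if_pos rfl, Matrix.one_apply, Prod.mk.injEq, true_and]
    by_cases hp : p1 ∈ Zx
    · rw [if_pos hp]
      have h1 := congrFun (congrFun (hu p1 hp).1 p2) q2
      rw [Matrix.mul_apply] at h1
      simp only [Matrix.star_apply] at h1
      rw [h1, Matrix.one_apply]
      simp
    · rw [if_neg hp]
      simp [ite_mul, Finset.sum_ite_eq', Matrix.one_apply, eq_comm]
  · rw [if_neg hpq, Matrix.one_apply, if_neg]
    simp [Prod.mk.injEq, hpq]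

lemma projOn_apply {N : ℕ} (P : Matrix (Fin N) (Fin N) ℝ) (Zx : Finset (Fin N))
    (p1 p2 q1 q2 : Fin N) :
    szegedyProjOn P Zx (p1, p2) (q1, q2) =
      if p1 = q1 ∧ p1 ∈ Zx then colState P p1 p2 * colState P p1 q2 else 0 := by
  simp only [szegedyProjOn, Matrix.sum_apply, of_apply, projState, _root_.map_mul,
    apply_ite (starRingEnd ℂ), _root_.map_one, map_zero, colState_real]
  have key : ∀ y ∈ Zx,
      ((if p1 = y then (1:ℂ) else 0) * colState P y p2) *
        ((if q1 = y then (1:ℂ) else 0) * colState P y q2) =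
      if y = p1 then (if p1 = q1 then colState P y p2 * colState P y q2 else 0)
      else 0 := by
    intro y _
    split_ifs <;> subst_vars <;> simp_all
  rw [Finset.sum_congr rfl key, Finset.sum_ite_eq']
  by_cases hpq : p1 = q1 <;> by_cases hp : p1 ∈ Zx <;> simp_all

lemma UQU_eq {N : ℕ} (P : Matrix (Fin N) (Fin N) ℝ) (Zx : Finset (Fin N))
    (bx : Fin N) (Uf : Fin N → Matrix (Fin N) (Fin N) ℂ)
    (hu : ∀ y ∈ Zx, Uf y ∈ Matrix.unitaryGroup (Fin N) ℂ)
    (hphi : ∀ y ∈ Zx, (Uf y).mulVec (colState P y) = Pi.single bx 1) :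
    (partBlock Zx Uf)ᴴ * qMat Zx bx * partBlock Zx Uf = szegedyProjOn P Zx := by
  have hqu : qMat Zx bx * partBlock Zx Uf =
      Matrix.of (fun r q => (if r.1 = q.1 ∧ r.1 ∈ Zx then 1 else 0) *
        (if r.2 = bx then 1 else 0) * Uf q.1 bx q.2) := by
    ext ⟨r1, r2⟩ ⟨q1, q2⟩
    rw [Matrix.mul_apply, Fintype.sum_prod_type]
    have key : ∀ s1 s2 : Fin N,
        qMat Zx bx (r1, r2) (s1, s2) * partBlock Zx Uf (s1, s2) (q1, q2) =
        if s1 = r1 then (if s2 = bx then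
          (if r1 = q1 ∧ r1 ∈ Zx then (1:ℂ) else 0) *
            (if r2 = bx then 1 else 0) * Uf q1 bx q2 else 0) else 0 := by
      intro s1 s2
      simp only [qMat, partBlock, of_apply]
      split_ifs <;> (try (obtain ⟨rfl, _⟩ := ‹_ ∧ _›)) <;> simp_all
    rw [Finset.sum_congr rfl (fun s1 _ => Finset.sum_congr rfl (fun s2 _ => key s1 s2))]
    simp [Finset.sum_ite_irrel, Finset.sum_const_zero, Finset.sum_ite_eq']
  rw [Matrix.mul_assoc, hqu]
  ext ⟨p1, p2⟩ ⟨q1, q2⟩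
  rw [Matrix.mul_apply, Fintype.sum_prod_type, projOn_apply]
  have key : ∀ r1 r2 : Fin N,
      (partBlock Zx Uf)ᴴ (p1, p2) (r1, r2) *
        ((if r1 = q1 ∧ r1 ∈ Zx then (1:ℂ) else 0) *
          (if r2 = bx then 1 else 0) * Uf q1 bx q2) =
      if r1 = p1 then (if r2 = bx then
        (if p1 = q1 ∧ p1 ∈ Zx then star (Uf p1 bx p2) * Uf q1 bx q2 else 0)
        else 0) else 0 := by
    intro r1 r2
    simp only [partBlock, conjTranspose_apply, of_apply]
    split_ifs <;> (try (obtain ⟨rfl, _⟩ := ‹_ ∧ _›)) <;>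
      (try (obtain ⟨rfl, _⟩ := ‹_ ∧ _›)) <;> simp_all
  simp only [of_apply]
  rw [Finset.sum_congr rfl (fun r1 _ => Finset.sum_congr rfl (fun r2 _ => key r1 r2))]
  simp only [Finset.sum_ite_irrel, Finset.sum_const_zero, Finset.sum_ite_eq',
    Finset.mem_univ, if_true]
  by_cases h : p1 = q1 ∧ p1 ∈ Zx
  · rw [if_pos h, if_pos h]
    obtain ⟨h1, h2⟩ := h
    subst h1
    rw [unitary_row P (Uf p1) bx p1 (hu p1 h2) (hphi p1 h2) p2,
      unitary_row P (Uf p1) bx p1 (hu p1 h2) (hphi p1 h2) q2,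
      Complex.star_def, colState_real]
  · rw [if_neg h, if_neg h]

lemma conj_eq {N : ℕ} (P : Matrix (Fin N) (Fin N) ℝ) (Zx : Finset (Fin N))
    (bx : Fin N) (Uf : Fin N → Matrix (Fin N) (Fin N) ℂ)
    (hu : ∀ y ∈ Zx, Uf y ∈ Matrix.unitaryGroup (Fin N) ℂ)
    (hphi : ∀ y ∈ Zx, (Uf y).mulVec (colState P y) = Pi.single bx 1) :
    (partBlock Zx Uf)ᴴ * partDiag Zx bx * partBlock Zx Uf =
      (2 : ℂ) • szegedyProjOn P Zx - 1 := by
  rw [partDiag_eq, Matrix.mul_sub, Matrix.mul_smul, Matrix.sub_mul, Matrix.smul_mul,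
    Matrix.mul_assoc ((partBlock Zx Uf)ᴴ) (qMat Zx bx) (partBlock Zx Uf),
    ← Matrix.mul_assoc, UQU_eq P Zx bx Uf hu hphi, Matrix.mul_one, UU_eq Zx Uf hu]

section ListProd
variable {n : Type*} [Fintype n] [DecidableEq n]

lemma prodStep (A B : Matrix n n ℂ) (h : A * B = 0) :
    ((2 : ℂ) • A - 1) * ((2 : ℂ) • B - 1) = -((2 : ℂ) • (A + B) - 1) := by
  rw [Matrix.sub_mul, Matrix.mul_sub, Matrix.smul_mul, Matrix.mul_smul, smul_smul,
    h, Matrix.mul_one, Matrix.one_mul, smul_add]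
  simp only [smul_zero]
  abel

lemma mul_listsum_zero (Pm : α → Matrix n n ℂ) (A : Matrix n n ℂ) :
    ∀ L : List α, (∀ y ∈ L, A * Pm y = 0) → A * (L.map Pm).sum = 0 := by
  intro L
  induction L with
  | nil => intro _; simp
  | cons a t ih =>
    intro h
    simp only [List.map_cons, List.sum_cons, Matrix.mul_add]
    rw [h a List.mem_cons_self, ih (fun y hy => h y (List.mem_cons_of_mem a hy))]
    simp

lemma listProd_reflections (Pm : α → Matrix n n ℂ)
    (horth : ∀ x y, x ≠ y → Pm x * Pm y = 0) :
    ∀ L : List α, L.Nodup → L ≠ [] →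
      (L.map (fun x => (2 : ℂ) • Pm x - 1)).prod =
        ((-1 : ℂ) ^ (L.length - 1)) • ((2 : ℂ) • (L.map Pm).sum - 1) := by
  intro L
  induction L with
  | nil => intro _ h; exact absurd rfl h
  | cons a t ih =>
    intro hnd _
    rcases List.eq_nil_or_concat t with ht | _
    · subst ht; simp
    · have htne : t ≠ [] := by rintro rfl; simp_all
      have hnd' := (List.nodup_cons.mp hnd).2
      have hna := (List.nodup_cons.mp hnd).1
      simp only [List.map_cons, List.prod_cons, List.sum_cons, List.length_cons]
      rw [ih hnd' htne]
      have hz : Pm a * (t.map Pm).sum = 0 :=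
        mul_listsum_zero Pm (Pm a) t (fun y hy => horth a y (by rintro rfl; exact hna hy))
      rw [mul_smul_comm, prodStep (Pm a) ((t.map Pm).sum) hz, smul_neg, ← neg_smul]
      congr 1
      have h1 : 1 ≤ t.length := List.length_pos_iff.mpr htne
      rw [Nat.add_sub_cancel]
      obtain ⟨k, hk⟩ : ∃ k, t.length = k + 1 := ⟨t.length - 1, by omega⟩
      rw [hk]
      simp [pow_succ]

end ListProd

set_option maxHeartbeats 1000000 in
/-- Partitioned diagonalization of the Szegedy reflection: for a partition
`Z_1, …, Z_M` of `{0, …, N−1}` into nonempty disjoint subsets, with unitaries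
`U_{x,y}` (for `y ∈ Z_x`) mapping `φ_y` to `e_{b_x}`, each conjugation
`U_x† D_x U_x` equals the reflection `2Π_x − I`; the `Π_x` are mutually orthogonal
projections summing to `Π`; and consequently
`S ∏_x U_x† D_x U_x = (−1)^(M−1) U_walk`. -/
theorem szegedyReflection_partitioned_diagonalization (N : ℕ) (hN : 1 ≤ N)
    (P : Matrix (Fin N) (Fin N) ℝ)
    (hnonneg : ∀ j i, 0 ≤ P j i) (hcol : ∀ i, ∑ j, P j i = 1)
    (M : ℕ) (hM : 1 ≤ M)
    (Z : Fin M → Finset (Fin N))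
    (hZne : ∀ x, (Z x).Nonempty)
    (hZdisj : ∀ x y, x ≠ y → Disjoint (Z x) (Z y))
    (hZcover : ∀ i : Fin N, ∃ x, i ∈ Z x)
    (b : Fin M → Fin N)
    (Uxy : Fin M → Fin N → Matrix (Fin N) (Fin N) ℂ)
    (hU : ∀ x, ∀ y ∈ Z x, Uxy x y ∈ Matrix.unitaryGroup (Fin N) ℂ)
    (hUphi : ∀ x, ∀ y ∈ Z x, (Uxy x y).mulVec (colState P y) = Pi.single (b x) 1) :
    (∀ x, (partBlock (Z x) (Uxy x))ᴴ * partDiag (Z x) (b x) * partBlock (Z x) (Uxy x)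
        = (2 : ℂ) • szegedyProjOn P (Z x) - 1) ∧
    (∀ x, (szegedyProjOn P (Z x)).IsHermitian ∧
        szegedyProjOn P (Z x) * szegedyProjOn P (Z x) = szegedyProjOn P (Z x)) ∧
    (∀ x y, x ≠ y → szegedyProjOn P (Z x) * szegedyProjOn P (Z y) = 0) ∧
    (∑ x, szegedyProjOn P (Z x) = szegedyProj P) ∧
    swapOp N *
        ((List.finRange M).map
          (fun x => (partBlock (Z x) (Uxy x))ᴴ * partDiag (Z x) (b x) *
            partBlock (Z x) (Uxy x))).prod
      = ((-1 : ℂ) ^ (M - 1)) • (swapOp N * ((2 : ℂ) • szegedyProj P - 1)) := by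
  
  refine ⟨fun x => conj_eq P (Z x) (b x) (Uxy x) (hU x) (hUphi x),
    fun x => ⟨projOn_herm P (Z x), projOn_idem P hnonneg hcol (Z x)⟩,
    fun x y hxy => projOn_mul P hnonneg hcol _ _ (hZdisj x y hxy),
    projOn_sum P Z hZdisj hZcover, ?_⟩
  have hmap : (List.finRange M).map
      (fun x => (partBlock (Z x) (Uxy x))ᴴ * partDiag (Z x) (b x) *
        partBlock (Z x) (Uxy x)) =
      (List.finRange M).map (fun x => (2 : ℂ) • szegedyProjOn P (Z x) - 1) :=
    List.map_congr_left (fun x _ => conj_eq P (Z x) (b x) (Uxy x) (hU x) (hUphi x))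
  have hne : List.finRange M ≠ [] := by
    intro h
    have := congrArg List.length h
    simp at this
    omega
  rw [hmap, listProd_reflections (fun x => szegedyProjOn P (Z x))
    (fun x y hxy => projOn_mul P hnonneg hcol _ _ (hZdisj x y hxy))
    (List.finRange M) (List.nodup_finRange M) hne]
  rw [mul_smul_comm, List.length_finRange, ← Fin.sum_univ_def,
    projOn_sum P Z hZdisj hZcover]
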